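/- Let F, G, H be finite groups and A a multiplicatively written abelian group. Let (U,μ) be an A-subcharacter of F × G and (V,ν) an A-subcharacter of G × H. Let g ∈ G and let g' ∈ p₂(U)·g·p₁(V) (i.e. g' = u·g·v with u ∈ p₂(U), v ∈ p₁(V)). Then: (U,μ) ∼ ᵍ'(V,ν) if and only if (U,μ) ∼ ᵍ(V,ν); |Γ∩(U, ᵍ'V)| = |Γ∩(U, ᵍV)|; and when these matchings hold, the A-subcharacter (U * ᵍ'V, μ * ᵍ'ν) of F × H lies in the same F × H-orbit (under simultaneous conjugation) as (U * ᵍV, μ * ᵍν). -/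

import Mathlib

open scoped Pointwise

section StarPrelude

variable {F G H I : Type*} [Group F] [Group G] [Group H] [Group I]
variable {A : Type*} [CommGroup A]

/-- The star product of subgroups `U ≤ F × G` and `V ≤ G × H`. -/
def starProd (U : Subgroup (F × G)) (V : Subgroup (G × H)) : Subgroup (F × H) where
  carrier := {p | ∃ g : G, (p.1, g) ∈ U ∧ (g, p.2) ∈ V}
  one_mem' := ⟨1, U.one_mem, V.one_mem⟩
  mul_mem' := by
    rintro ⟨a, b⟩ ⟨c, d⟩ ⟨g, h1, h2⟩ ⟨g', h1', h2'⟩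
    exact ⟨g * g', U.mul_mem h1 h1', V.mul_mem h2 h2'⟩
  inv_mem' := by
    rintro ⟨a, b⟩ ⟨g, h1, h2⟩
    exact ⟨g⁻¹, U.inv_mem h1, V.inv_mem h2⟩

infixl:70 " ⋆ " => starProd

theorem mem_starProd {U : Subgroup (F × G)} {V : Subgroup (G × H)} {p : F × H} :
    p ∈ U ⋆ V ↔ ∃ g : G, (p.1, g) ∈ U ∧ (g, p.2) ∈ V := Iff.rfl

/-- `Γ(U,V) = {(f,g,h) : (f,g) ∈ U, (g,h) ∈ V}`. -/
def gammaSet (U : Subgroup (F × G)) (V : Subgroup (G × H)) : Set (F × G × H) :=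
  {p | (p.1, p.2.1) ∈ U ∧ (p.2.1, p.2.2) ∈ V}

/-- `Γ∩(U,V) = {g ∈ G : (1,g) ∈ U and (g,1) ∈ V}`. -/
def gammaCap (U : Subgroup (F × G)) (V : Subgroup (G × H)) : Set G :=
  {g | ((1 : F), g) ∈ U ∧ (g, (1 : H)) ∈ V}

/-- `p₁(U)`, the image of `U ≤ F × G` in `F`. -/
def proj1 (U : Subgroup (F × G)) : Subgroup F := U.map (MonoidHom.fst F G)

/-- `p₂(U)`, the image of `U ≤ F × G` in `G`. -/
def proj2 (U : Subgroup (F × G)) : Subgroup G := U.map (MonoidHom.snd F G)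

/-- `k₁(U) = {f : (f,1) ∈ U}`. -/
def ker1 (U : Subgroup (F × G)) : Set F := {f | (f, (1 : G)) ∈ U}

/-- `k₂(U) = {g : (1,g) ∈ U}`. -/
def ker2 (U : Subgroup (F × G)) : Set G := {g | ((1 : F), g) ∈ U}

end StarPrelude
section CharPrelude

variable {F G H I : Type*} [Group F] [Group G] [Group H] [Group I]
variable {A : Type*} [CommGroup A]

/-- The conjugate `ᵉU = e·U·e⁻¹` of a subgroup `U` of `E`. -/
def conjSub {E : Type*} [Group E] (e : E) (U : Subgroup E) : Subgroup E :=
  U.map (MulAut.conj e).toMonoidHom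

/-- The conjugate `ᵉμ` of an `A`-character `μ : U → A`, defined by `ᵉμ(e·t·e⁻¹) = μ(t)`. -/
def conjChar {E : Type*} [Group E] (e : E) {U : Subgroup E} (μ : U →* A) :
    conjSub e U →* A :=
  μ.comp ((MulAut.conj e).subgroupMap U).symm.toMonoidHom

/-- The matching relation `(U,μ) ∼ (V,ν)`: `μ(1,g)·ν(g,1) = 1` for all `g ∈ Γ∩(U,V)`. -/
def Matches {U : Subgroup (F × G)} {V : Subgroup (G × H)} (μ : U →* A) (ν : V →* A) : Prop :=
  ∀ (g : G) (hU : ((1 : F), g) ∈ U) (hV : (g, (1 : H)) ∈ V),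
    μ ⟨(1, g), hU⟩ * ν ⟨(g, 1), hV⟩ = 1

theorem charStar_aux {U : Subgroup (F × G)} {V : Subgroup (G × H)}
    {μ : U →* A} {ν : V →* A} (hm : Matches μ ν)
    (f : F) (k : H) (g g' : G)
    (h1 : (f, g) ∈ U) (h2 : (g, k) ∈ V) (h1' : (f, g') ∈ U) (h2' : (g', k) ∈ V) :
    μ ⟨(f, g), h1⟩ * ν ⟨(g, k), h2⟩ = μ ⟨(f, g'), h1'⟩ * ν ⟨(g', k), h2'⟩ := by
  have hx1 : ((1 : F), g * g'⁻¹) ∈ U := by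
    have := U.mul_mem h1 (U.inv_mem h1')
    simpa [Prod.ext_iff] using this
  have hx2 : (g * g'⁻¹, (1 : H)) ∈ V := by
    have := V.mul_mem h2 (V.inv_mem h2')
    simpa [Prod.ext_iff] using this
  have key := hm (g * g'⁻¹) hx1 hx2
  have e1 : (⟨(f, g), h1⟩ : U) = ⟨((1 : F), g * g'⁻¹), hx1⟩ * ⟨(f, g'), h1'⟩ := by
    apply Subtype.ext
    simp [Prod.ext_iff]
  have e2 : (⟨(g, k), h2⟩ : V) = ⟨(g * g'⁻¹, (1 : H)), hx2⟩ * ⟨(g', k), h2'⟩ := by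
    apply Subtype.ext
    simp [Prod.ext_iff]
  rw [e1, e2, map_mul, map_mul, mul_mul_mul_comm, key, one_mul]

/-- The underlying function of the star product `μ * ν` of two matching `A`-characters. -/
noncomputable def charStarFun {U : Subgroup (F × G)} {V : Subgroup (G × H)}
    (μ : U →* A) (ν : V →* A) (p : U ⋆ V) : A :=
  μ ⟨((p : F × H).1, (mem_starProd.mp p.2).choose), (mem_starProd.mp p.2).choose_spec.1⟩ *
    ν ⟨((mem_starProd.mp p.2).choose, (p : F × H).2), (mem_starProd.mp p.2).choose_spec.2⟩

theorem charStarFun_eq {U : Subgroup (F × G)} {V : Subgroup (G × H)}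
    {μ : U →* A} {ν : V →* A} (hm : Matches μ ν) (p : U ⋆ V) (g : G)
    (h1 : ((p : F × H).1, g) ∈ U) (h2 : (g, (p : F × H).2) ∈ V) :
    charStarFun μ ν p = μ ⟨((p : F × H).1, g), h1⟩ * ν ⟨(g, (p : F × H).2), h2⟩ :=
  charStar_aux hm _ _ _ _ _ _ h1 h2

/-- The star product `μ * ν : U * V → A` of two matching `A`-characters, characterized by
`(μ * ν)(f,h) = μ(f,g)·ν(g,h)` whenever `(f,g) ∈ U` and `(g,h) ∈ V`. -/
noncomputable def charStar {U : Subgroup (F × G)} {V : Subgroup (G × H)}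
    {μ : U →* A} {ν : V →* A} (hm : Matches μ ν) : (U ⋆ V : Subgroup (F × H)) →* A where
  toFun := charStarFun μ ν
  map_one' := by
    show charStarFun μ ν 1 = 1
    rw [charStarFun_eq hm 1 1 (by exact U.one_mem) (by exact V.one_mem)]
    have e1 : (⟨(((1 : U ⋆ V) : F × H).1, (1 : G)), by exact U.one_mem⟩ : U) = 1 := by
      apply Subtype.ext; simp [Prod.ext_iff]
    have e2 : (⟨((1 : G), ((1 : U ⋆ V) : F × H).2), by exact V.one_mem⟩ : V) = 1 := by
      apply Subtype.ext; simp [Prod.ext_iff]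
    rw [e1, e2, map_one, map_one, one_mul]
  map_mul' p q := by
    show charStarFun μ ν (p * q) = charStarFun μ ν p * charStarFun μ ν q
    obtain ⟨gp, hp1, hp2⟩ := mem_starProd.mp p.2
    obtain ⟨gq, hq1, hq2⟩ := mem_starProd.mp q.2
    have hpq1 : (((p * q : U ⋆ V) : F × H).1, gp * gq) ∈ U := by
      have := U.mul_mem hp1 hq1
      simpa [Prod.ext_iff] using this
    have hpq2 : (gp * gq, ((p * q : U ⋆ V) : F × H).2) ∈ V := by
      have := V.mul_mem hp2 hq2
      simpa [Prod.ext_iff] using this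
    rw [charStarFun_eq hm p gp hp1 hp2, charStarFun_eq hm q gq hq1 hq2,
      charStarFun_eq hm (p * q) (gp * gq) hpq1 hpq2]
    have e1 : (⟨(((p * q : U ⋆ V) : F × H).1, gp * gq), hpq1⟩ : U) =
        ⟨(((p : F × H)).1, gp), hp1⟩ * ⟨(((q : F × H)).1, gq), hq1⟩ := by
      apply Subtype.ext; simp [Prod.ext_iff]
    have e2 : (⟨(gp * gq, ((p * q : U ⋆ V) : F × H).2), hpq2⟩ : V) =
        ⟨(gp, ((p : F × H)).2), hp2⟩ * ⟨(gq, ((q : F × H)).2), hq2⟩ := by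
      apply Subtype.ext; simp [Prod.ext_iff]
    rw [e1, e2, map_mul, map_mul, mul_mul_mul_comm]

theorem charStar_apply {U : Subgroup (F × G)} {V : Subgroup (G × H)}
    {μ : U →* A} {ν : V →* A} (hm : Matches μ ν) (p : F × H) (hp : p ∈ U ⋆ V)
    (g : G) (h1 : (p.1, g) ∈ U) (h2 : (g, p.2) ∈ V) :
    charStar hm ⟨p, hp⟩ = μ ⟨(p.1, g), h1⟩ * ν ⟨(g, p.2), h2⟩ :=
  charStarFun_eq hm ⟨p, hp⟩ g h1 h2

end CharPrelude

section MyHelpers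

variable {E : Type*} [Group E] {A : Type*} [CommGroup A]

theorem mem_conjSub {e x : E} {U : Subgroup E} :
    x ∈ conjSub e U ↔ e⁻¹ * x * e ∈ U := by
  constructor
  · rintro ⟨y, hy, rfl⟩
    simpa [MulAut.conj_apply, mul_assoc] using hy
  · intro hx
    refine ⟨e⁻¹ * x * e, hx, ?_⟩
    simp [MulAut.conj_apply, mul_assoc]

theorem hom_congr {U : Subgroup E} (μ : U →* A) {a b : E} (hab : a = b)
    (ha : a ∈ U) (hb : b ∈ U) : μ ⟨a, ha⟩ = μ ⟨b, hb⟩ := by subst hab; rfl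

theorem map_conj {U : Subgroup E} (μ : U →* A) {a b : E}
    (ha : a ∈ U) (hb : b ∈ U) (hc : a * b * a⁻¹ ∈ U) :
    μ ⟨a * b * a⁻¹, hc⟩ = μ ⟨b, hb⟩ := by
  have h1 : (⟨a * b * a⁻¹, hc⟩ : U) = ⟨a, ha⟩ * ⟨b, hb⟩ * ⟨a, ha⟩⁻¹ := by
    apply Subtype.ext; rfl
  rw [h1, map_mul, map_mul, map_inv, mul_right_comm, mul_inv_cancel, one_mul]

theorem map_conj' {U : Subgroup E} (μ : U →* A) {a b : E}
    (ha : a ∈ U) (hb : b ∈ U) (hc : a⁻¹ * b * a ∈ U) :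
    μ ⟨a⁻¹ * b * a, hc⟩ = μ ⟨b, hb⟩ := by
  have h2 : a⁻¹ * b * a = a⁻¹ * b * (a⁻¹)⁻¹ := by rw [inv_inv]
  rw [hom_congr μ h2 hc (h2 ▸ hc)]
  exact map_conj μ (U.inv_mem ha) hb _

theorem conjChar_apply {e : E} {U : Subgroup E} (μ : U →* A) {x : E}
    (hx : x ∈ conjSub e U) (h' : e⁻¹ * x * e ∈ U) :
    conjChar e μ ⟨x, hx⟩ = μ ⟨e⁻¹ * x * e, h'⟩ := by
  unfold conjChar
  show μ (((MulAut.conj e).subgroupMap U).symm ⟨x, hx⟩) = _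
  exact congrArg μ (Subtype.ext (by simp [MulAut.conj_symm_apply]))

end MyHelpers

section MyHelpers2

variable {F G H : Type*} [Group F] [Group G] [Group H] {A : Type*} [CommGroup A]

theorem mem_conjSub_pair {V : Subgroup (G × H)} (g s : G) (k : H) :
    (s, k) ∈ conjSub ((g, 1) : G × H) V ↔ (g⁻¹ * s * g, k) ∈ V := by
  rw [mem_conjSub]; simp

theorem conjChar_pair {V : Subgroup (G × H)} (ν : V →* A) (g s : G) (k : H)
    (hsk : (s, k) ∈ conjSub ((g, 1) : G × H) V) (h' : (g⁻¹ * s * g, k) ∈ V) :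
    conjChar ((g, 1) : G × H) ν ⟨(s, k), hsk⟩ = ν ⟨(g⁻¹ * s * g, k), h'⟩ := by
  rw [conjChar_apply ν hsk (by simpa using h')]
  exact hom_congr ν (by simp) _ _

/-- One direction of the matching equivalence. -/
theorem matches_aux {U : Subgroup (F × G)} {V : Subgroup (G × H)}
    {μ : U →* A} {ν : V →* A} {f : F} {u : G} (hfu : (f, u) ∈ U)
    {v : G} {h : H} (hvh : (v, h) ∈ V) (g : G)
    (hm : Matches μ (conjChar ((u * g * v, 1) : G × H) ν)) :
    Matches μ (conjChar ((g, 1) : G × H) ν) := by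
  intro s hU hV
  have hV' : (g⁻¹ * s * g, (1 : H)) ∈ V := (mem_conjSub_pair g s 1).mp hV
  have hUt : ((1 : F), u * s * u⁻¹) ∈ U := by
    have h1 : (((1 : F), u * s * u⁻¹) : F × G) = (f, u) * (1, s) * (f, u)⁻¹ := by
      simp [Prod.ext_iff]
    rw [h1]; exact U.mul_mem (U.mul_mem hfu hU) (U.inv_mem hfu)
  have hVt : ((u * g * v)⁻¹ * (u * s * u⁻¹) * (u * g * v), (1 : H)) ∈ V := by
    have h2 : (((u * g * v)⁻¹ * (u * s * u⁻¹) * (u * g * v), (1 : H)) : G × H) =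
        (v, h)⁻¹ * (g⁻¹ * s * g, 1) * (v, h) := by
      simp [Prod.ext_iff]; group
    rw [h2]; exact V.mul_mem (V.mul_mem (V.inv_mem hvh) hV') hvh
  have hVt' : (u * s * u⁻¹, (1 : H)) ∈ conjSub ((u * g * v, 1) : G × H) V :=
    (mem_conjSub_pair _ _ _).mpr hVt
  have key := hm (u * s * u⁻¹) hUt hVt'
  rw [conjChar_pair ν _ _ _ hVt' hVt] at key
  rw [conjChar_pair ν g s 1 hV hV']
  have e1 : μ ⟨((1 : F), s), hU⟩ = μ ⟨((1 : F), u * s * u⁻¹), hUt⟩ := by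
    have h3 : (((1 : F), u * s * u⁻¹) : F × G) = (f, u) * (1, s) * (f, u)⁻¹ := by
      simp [Prod.ext_iff]
    rw [hom_congr μ h3 hUt (h3 ▸ hUt), map_conj μ hfu hU]
  have e2 : ν ⟨(g⁻¹ * s * g, (1 : H)), hV'⟩ =
      ν ⟨((u * g * v)⁻¹ * (u * s * u⁻¹) * (u * g * v), (1 : H)), hVt⟩ := by
    have h4 : (((u * g * v)⁻¹ * (u * s * u⁻¹) * (u * g * v), (1 : H)) : G × H) =
        (v, h)⁻¹ * (g⁻¹ * s * g, 1) * (v, h) := by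
      simp [Prod.ext_iff]; group
    rw [hom_congr ν h4 hVt (h4 ▸ hVt), map_conj' ν hvh hV']
  rw [e1, e2]; exact key

theorem gammaCap_conj_mem {U : Subgroup (F × G)} {V : Subgroup (G × H)}
    {f : F} {u : G} (hfu : (f, u) ∈ U) {v : G} {h : H} (hvh : (v, h) ∈ V) (g : G)
    {t : G} (ht : t ∈ gammaCap U (conjSub ((u * g * v, 1) : G × H) V)) :
    u⁻¹ * t * u ∈ gammaCap U (conjSub ((g, 1) : G × H) V) := by
  obtain ⟨ht1, ht2⟩ := ht
  have ht2' : ((u * g * v)⁻¹ * t * (u * g * v), (1 : H)) ∈ V :=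
    (mem_conjSub_pair _ _ _).mp ht2
  constructor
  · have h1 : (((1 : F), u⁻¹ * t * u) : F × G) = (f, u)⁻¹ * (1, t) * (f, u) := by
      simp [Prod.ext_iff]
    rw [h1]; exact U.mul_mem (U.mul_mem (U.inv_mem hfu) ht1) hfu
  · rw [mem_conjSub_pair]
    have h2 : ((g⁻¹ * (u⁻¹ * t * u) * g, (1 : H)) : G × H) =
        (v, h) * ((u * g * v)⁻¹ * t * (u * g * v), 1) * (v, h)⁻¹ := by
      simp [Prod.ext_iff]; group
    rw [h2]; exact V.mul_mem (V.mul_mem hvh ht2') (V.inv_mem hvh)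

theorem star_conj_mem {U : Subgroup (F × G)} {V : Subgroup (G × H)}
    {f : F} {u : G} (hfu : (f, u) ∈ U) {v : G} {h : H} (hvh : (v, h) ∈ V) (g : G)
    {x : F} {y : H}
    (hxy : (f⁻¹ * x * f, h * y * h⁻¹) ∈ U ⋆ conjSub ((g, 1) : G × H) V) :
    (x, y) ∈ U ⋆ conjSub ((u * g * v, 1) : G × H) V := by
  obtain ⟨s, hs1, hs2⟩ := mem_starProd.mp hxy
  have hs2' : (g⁻¹ * s * g, h * y * h⁻¹) ∈ V := (mem_conjSub_pair _ _ _).mp hs2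
  refine mem_starProd.mpr ⟨u * s * u⁻¹, ?_, ?_⟩
  · have h1 : ((x, u * s * u⁻¹) : F × G) = (f, u) * (f⁻¹ * x * f, s) * (f, u)⁻¹ := by
      simp [Prod.ext_iff]; group
    rw [h1]; exact U.mul_mem (U.mul_mem hfu hs1) (U.inv_mem hfu)
  · rw [mem_conjSub_pair]
    have h2 : (((u * g * v)⁻¹ * (u * s * u⁻¹) * (u * g * v), y) : G × H) =
        (v, h)⁻¹ * (g⁻¹ * s * g, h * y * h⁻¹) * (v, h) := by
      simp only [Prod.mk_mul_mk, Prod.inv_mk, Prod.mk.injEq]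
      constructor <;> group
    rw [h2]; exact V.mul_mem (V.mul_mem (V.inv_mem hvh) hs2') hvh

end MyHelpers2

/-- For `g ∈ G` and `g' = u·g·v ∈ p₂(U)·g·p₁(V)`:
`(U,μ) ∼ ᵍ'(V,ν)` iff `(U,μ) ∼ ᵍ(V,ν)`; `|Γ∩(U, ᵍ'V)| = |Γ∩(U, ᵍV)|`; and when these
matchings hold, `(U * ᵍ'V, μ * ᵍ'ν)` and `(U * ᵍV, μ * ᵍν)` lie in the same
`F × H`-orbit under simultaneous conjugation. -/
theorem stmt13 {F G H : Type*} [Group F] [Group G] [Group H]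
    [Finite F] [Finite G] [Finite H] {A : Type*} [CommGroup A]
    {U : Subgroup (F × G)} {V : Subgroup (G × H)} (μ : U →* A) (ν : V →* A)
    (g u v : G) (hu : u ∈ proj2 U) (hv : v ∈ proj1 V) :
    (Matches μ (conjChar ((u * g * v, 1) : G × H) ν) ↔
      Matches μ (conjChar ((g, 1) : G × H) ν)) ∧
    (Nat.card (gammaCap U (conjSub ((u * g * v, 1) : G × H) V)) =
      Nat.card (gammaCap U (conjSub ((g, 1) : G × H) V))) ∧
    (∀ (hm : Matches μ (conjChar ((g, 1) : G × H) ν))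
      (hm' : Matches μ (conjChar ((u * g * v, 1) : G × H) ν)),
      ∃ e : F × H,
        conjSub e (U ⋆ conjSub ((g, 1) : G × H) V) =
          U ⋆ conjSub ((u * g * v, 1) : G × H) V ∧
        ∀ (p : F × H) (hp : p ∈ conjSub e (U ⋆ conjSub ((g, 1) : G × H) V))
          (hp' : p ∈ U ⋆ conjSub ((u * g * v, 1) : G × H) V),
          conjChar e (charStar hm) ⟨p, hp⟩ = charStar hm' ⟨p, hp'⟩) := by
  obtain ⟨xU, hxU, hxu⟩ := hu
  obtain ⟨yV, hyV, hyv⟩ := hv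
  set f := xU.1 with hfdef
  set h := yV.2 with hhdef
  have hfu : (f, u) ∈ U := by rw [← hxu]; exact hxU
  have hvh : (v, h) ∈ V := by rw [← hyv]; exact hyV
  have hfu' : (f⁻¹, u⁻¹) ∈ U := by
    have := U.inv_mem hfu; simpa using this
  have hvh' : (v⁻¹, h⁻¹) ∈ V := by
    have := V.inv_mem hvh; simpa using this
  have hgg : u⁻¹ * (u * g * v) * v⁻¹ = g := by group
  refine ⟨⟨matches_aux hfu hvh g, ?_⟩, ?_, ?_⟩
  · intro hm
    exact matches_aux hfu' hvh' (u * g * v) (by rw [hgg]; exact hm)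
  · apply Nat.card_congr
    have rev : ∀ s : G, s ∈ gammaCap U (conjSub ((g, 1) : G × H) V) →
        u * s * u⁻¹ ∈ gammaCap U (conjSub ((u * g * v, 1) : G × H) V) := by
      intro s hs
      have h1 := gammaCap_conj_mem hfu' hvh' (u * g * v) (t := s) (by rw [hgg]; exact hs)
      simpa using h1
    refine ⟨fun t => ⟨u⁻¹ * t.1 * u, gammaCap_conj_mem hfu hvh g t.2⟩,
      fun s => ⟨u * s.1 * u⁻¹, rev s.1 s.2⟩, fun t => ?_, fun s => ?_⟩
    · apply Subtype.ext; show u * (u⁻¹ * t.1 * u) * u⁻¹ = t.1; group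
    · apply Subtype.ext; show u⁻¹ * (u * s.1 * u⁻¹) * u = s.1; group
  · intro hm hm'
    have hset : conjSub ((f, h⁻¹) : F × H) (U ⋆ conjSub ((g, 1) : G × H) V) =
        U ⋆ conjSub ((u * g * v, 1) : G × H) V := by
      ext p
      obtain ⟨x, y⟩ := p
      rw [mem_conjSub]
      have hxy : ((f, h⁻¹) : F × H)⁻¹ * (x, y) * (f, h⁻¹) = (f⁻¹ * x * f, h * y * h⁻¹) := by
        simp only [Prod.mk_mul_mk, Prod.inv_mk, Prod.mk.injEq]
        constructor <;> group
      rw [hxy]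
      constructor
      · intro hx; exact star_conj_mem hfu hvh g hx
      · intro hx
        have e : (((f⁻¹)⁻¹ * (f⁻¹ * x * f) * f⁻¹, h⁻¹ * (h * y * h⁻¹) * (h⁻¹)⁻¹) : F × H)
            = (x, y) := by
          simp only [Prod.mk.injEq]; constructor <;> group
        have h1 : ((f⁻¹)⁻¹ * (f⁻¹ * x * f) * f⁻¹, h⁻¹ * (h * y * h⁻¹) * (h⁻¹)⁻¹)
            ∈ U ⋆ conjSub ((u * g * v, 1) : G × H) V := by rw [e]; exact hx
        have h2 := star_conj_mem hfu' hvh' (u * g * v) h1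
        rwa [hgg] at h2
    refine ⟨(f, h⁻¹), hset, ?_⟩
    intro p hp hp'
    obtain ⟨x, y⟩ := p
    have hmem : ((f, h⁻¹) : F × H)⁻¹ * (x, y) * (f, h⁻¹) ∈ U ⋆ conjSub ((g, 1) : G × H) V :=
      mem_conjSub.mp hp
    have hxy : ((f, h⁻¹) : F × H)⁻¹ * (x, y) * (f, h⁻¹) = (f⁻¹ * x * f, h * y * h⁻¹) := by
      simp only [Prod.mk_mul_mk, Prod.inv_mk, Prod.mk.injEq]
      constructor <;> group
    have hmem' : ((f⁻¹ * x * f, h * y * h⁻¹) : F × H) ∈ U ⋆ conjSub ((g, 1) : G × H) V := by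
      rw [← hxy]; exact hmem
    obtain ⟨s, hs1, hs2⟩ := mem_starProd.mp hmem'
    have hs1' : (f⁻¹ * x * f, s) ∈ U := hs1
    have hs2c : (s, h * y * h⁻¹) ∈ conjSub ((g, 1) : G × H) V := hs2
    have hs2' : (g⁻¹ * s * g, h * y * h⁻¹) ∈ V := (mem_conjSub_pair _ _ _).mp hs2c
    have eU : ((x, u * s * u⁻¹) : F × G) = (f, u) * (f⁻¹ * x * f, s) * (f, u)⁻¹ := by
      simp only [Prod.mk_mul_mk, Prod.inv_mk, Prod.mk.injEq]
      constructor <;> group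
    have ht1 : ((x, u * s * u⁻¹) : F × G) ∈ U := by
      rw [eU]; exact U.mul_mem (U.mul_mem hfu hs1') (U.inv_mem hfu)
    have eV : (((u * g * v)⁻¹ * (u * s * u⁻¹) * (u * g * v), y) : G × H) =
        (v, h)⁻¹ * (g⁻¹ * s * g, h * y * h⁻¹) * (v, h) := by
      simp only [Prod.mk_mul_mk, Prod.inv_mk, Prod.mk.injEq]
      constructor <;> group
    have ht2V : (((u * g * v)⁻¹ * (u * s * u⁻¹) * (u * g * v), y) : G × H) ∈ V := by
      rw [eV]; exact V.mul_mem (V.mul_mem (V.inv_mem hvh) hs2') hvh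
    have ht2 : ((u * s * u⁻¹, y) : G × H) ∈ conjSub ((u * g * v, 1) : G × H) V :=
      (mem_conjSub_pair _ _ _).mpr ht2V
    have emu : μ ⟨(x, u * s * u⁻¹), ht1⟩ = μ ⟨(f⁻¹ * x * f, s), hs1'⟩ := by
      rw [hom_congr μ eU ht1 (by rw [← eU]; exact ht1)]
      exact map_conj μ hfu hs1' _
    have enu : ν ⟨((u * g * v)⁻¹ * (u * s * u⁻¹) * (u * g * v), y), ht2V⟩ =
        ν ⟨(g⁻¹ * s * g, h * y * h⁻¹), hs2'⟩ := by
      rw [hom_congr ν eV ht2V (by rw [← eV]; exact ht2V)]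
      exact map_conj' ν hvh hs2' _
    calc conjChar ((f, h⁻¹) : F × H) (charStar hm) ⟨(x, y), hp⟩
        = charStar hm ⟨((f, h⁻¹) : F × H)⁻¹ * (x, y) * (f, h⁻¹), hmem⟩ :=
          conjChar_apply (charStar hm) hp hmem
      _ = charStar hm ⟨(f⁻¹ * x * f, h * y * h⁻¹), hmem'⟩ :=
          hom_congr (charStar hm) hxy hmem hmem'
      _ = μ ⟨(f⁻¹ * x * f, s), hs1'⟩ *
            conjChar ((g, 1) : G × H) ν ⟨(s, h * y * h⁻¹), hs2c⟩ :=
          charStar_apply hm (f⁻¹ * x * f, h * y * h⁻¹) hmem' s hs1' hs2c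
      _ = μ ⟨(f⁻¹ * x * f, s), hs1'⟩ * ν ⟨(g⁻¹ * s * g, h * y * h⁻¹), hs2'⟩ := by
          rw [conjChar_pair ν g s (h * y * h⁻¹) hs2c hs2']
      _ = μ ⟨(x, u * s * u⁻¹), ht1⟩ *
            ν ⟨((u * g * v)⁻¹ * (u * s * u⁻¹) * (u * g * v), y), ht2V⟩ := by
          rw [emu, enu]
      _ = μ ⟨(x, u * s * u⁻¹), ht1⟩ *
            conjChar ((u * g * v, 1) : G × H) ν ⟨(u * s * u⁻¹, y), ht2⟩ := by
          rw [conjChar_pair ν (u * g * v) (u * s * u⁻¹) y ht2 ht2V]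
      _ = charStar hm' ⟨(x, y), hp'⟩ :=
          (charStar_apply hm' (x, y) hp' (u * s * u⁻¹) ht1 ht2).symm
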